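/- In the setting of the previous proposition, assume in addition: the cocycle is constant, q_{ij} = q ∈ k^× for all i, j ∈ X; each map f_{j_s} : X → X (1 ≤ s ≤ N) is bijective; D is group-like, i.e. Δ(D) = D ⊗ D; and r also satisfies (CQT3) Σ r(x_(1), y_(1)) x_(2) y_(2) = Σ y_(1) x_(1) r(x_(2), y_(2)) for all x, y ∈ A. For a, b ∈ X define a_0 := a, a_s := f_{j_s}(a_{s−1}) for 1 ≤ s ≤ N, and define b_N := b, b_{s−1} := f_{j_s}^{−1}(b_s) for 1 ≤ s ≤ N. Then α(g_{a_0}(j_1), g_{a_1}(j_2), …, g_{a_{N−1}}(j_N)) · D · t_{a_N, b} = α(g_{b_0}(j_1), g_{b_1}(j_2), …, g_{b_{N−1}}(j_N)) · t_{a, b_0} · D. -/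

import Mathlib

open scoped TensorProduct

section QDAux

variable {k : Type*} [Field k] {A : Type*} [Ring A] [Bialgebra k A] {n : ℕ}

/-- End point of the chain `a, f p₁ a, …` determined by a list of pairs. -/
def qdEnd (f : Fin n → Fin n → Fin n) : List (Fin n × Fin n) → Fin n → Fin n
  | [], a => a
  | p :: L, a => qdEnd f L (f p.1 a)

/-- The condition that each second coordinate matches the `g`-chain. -/
def qdOk (f g : Fin n → Fin n → Fin n) : List (Fin n × Fin n) → Fin n → Prop
  | [], _ => True
  | p :: L, a => p.2 = g a p.1 ∧ qdOk f g L (f p.1 a)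

instance qdOk.dec (f g : Fin n → Fin n → Fin n) :
    ∀ (L : List (Fin n × Fin n)) (a : Fin n), Decidable (qdOk f g L a)
  | [], _ => isTrue trivial
  | _ :: L, a => @instDecidableAnd _ _ _ (qdOk.dec f g L _)

theorem qd_r_prod (g f : Fin n → Fin n → Fin n) (q₀ : k) (t : Fin n → Fin n → A)
    (hcomul : ∀ i j, Coalgebra.comul (R := k) (t i j) = ∑ m, t i m ⊗ₜ[k] t m j)
    (r : A →ₗ[k] A →ₗ[k] k)
    (hCQT1 : ∀ (a b c : A) {ι : Type*} (rc : Coalgebra.Repr k c ι),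
      r (a * b) c = ∑ i ∈ rc.index, r a (rc.left i) * r b (rc.right i))
    (hrt : ∀ i c j l, r (t i c) (t j l) = if c = g j i ∧ l = f i j then q₀ else 0) :
    ∀ (L : List (Fin n × Fin n)) (p : Fin n × Fin n) (a c : Fin n),
      r (((p :: L).map fun p => t p.1 p.2).prod) (t a c) =
        if qdOk f g (p :: L) a ∧ c = qdEnd f (p :: L) a then q₀ ^ (p :: L).length else 0 := by
  intro L
  induction L with
  | nil =>
    intro p a c
    simp [qdOk, qdEnd, hrt]
  | cons p' L ih =>
    intro p a c
    have hsplit : (((p :: p' :: L).map fun p => t p.1 p.2).prod)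
        = t p.1 p.2 * (((p' :: L).map fun p => t p.1 p.2).prod) := by
      simp
    rw [hsplit, hCQT1 _ _ _ (Coalgebra.Repr.mk (ι := ULift (Fin n)) Finset.univ
      (fun m => t a m.down) (fun m => t m.down c)
      (by rw [hcomul a c]; exact Fintype.sum_equiv Equiv.ulift _ _ (fun j => rfl)))]
    have hcollapse : (∑ i : ULift (Fin n),
        r (t p.1 p.2) (t a i.down) * r (((p' :: L).map fun p => t p.1 p.2).prod) (t i.down c))
        = ∑ m : Fin n,
          r (t p.1 p.2) (t a m) * r (((p' :: L).map fun p => t p.1 p.2).prod) (t m c) :=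
      Fintype.sum_equiv Equiv.ulift _ _ (fun j => rfl)
    rw [hcollapse]
    simp only [hrt]
    by_cases h1 : p.2 = g a p.1
    · simp only [h1, true_and, ite_mul, zero_mul]
      rw [Finset.sum_ite_eq' Finset.univ (f p.1 a)
        (fun m => q₀ * r (((p' :: L).map fun p => t p.1 p.2).prod) (t m c))]
      rw [if_pos (Finset.mem_univ _), ih p' (f p.1 a) c]
      simp only [qdOk, qdEnd, h1, true_and, List.length_cons, mul_ite, mul_zero]
      split_ifs with h
      · exact (congrArg (q₀ * ·) (if_pos h)).trans (by ring)
      · exact (congrArg (q₀ * ·) (if_neg h)).trans (mul_zero _)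
    · have hno : ¬ (qdOk f g (p :: p' :: L) a ∧ c = qdEnd f (p :: p' :: L) a) := by
        rintro ⟨⟨h, -⟩, -⟩; exact h1 h
      rw [if_neg hno]
      refine Finset.sum_eq_zero fun m _ => ?_
      rw [if_neg (fun hh => h1 hh.1), zero_mul]

theorem qdEnd_ofFn (f : Fin n → Fin n → Fin n) :
    ∀ (M : ℕ) (js is : Fin M → Fin n) (a : Fin n) (ch : ℕ → Fin n),
      ch 0 = a → (∀ s : Fin M, ch (s.1 + 1) = f (js s) (ch s.1)) →
      qdEnd f (List.ofFn fun s => (js s, is s)) a = ch M := by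
  intro M
  induction M with
  | zero => intro js is a ch h0 _; simpa [qdEnd] using h0.symm
  | succ M ih =>
    intro js is a ch h0 hstep
    simp only [List.ofFn_succ, qdEnd]
    exact ih (fun s => js s.succ) (fun s => is s.succ) (f (js 0) a) (fun m => ch (m + 1))
      (by simpa [h0] using hstep 0) (fun s => by simpa using hstep s.succ)

theorem qdOk_ofFn (f g : Fin n → Fin n → Fin n) :
    ∀ (M : ℕ) (js is : Fin M → Fin n) (a : Fin n) (ch : ℕ → Fin n),
      ch 0 = a → (∀ s : Fin M, ch (s.1 + 1) = f (js s) (ch s.1)) →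
      (qdOk f g (List.ofFn fun s => (js s, is s)) a ↔ ∀ s : Fin M, is s = g (ch s.1) (js s)) := by
  intro M
  induction M with
  | zero =>
    intro js is a ch h0 _
    simp [qdOk]
  | succ M ih =>
    intro js is a ch h0 hstep
    simp only [List.ofFn_succ, qdOk]
    rw [Fin.forall_fin_succ]
    have hih := ih (fun s => js s.succ) (fun s => is s.succ) (f (js 0) a) (fun m => ch (m + 1))
      (by simpa [h0] using hstep 0) (fun s => by simpa using hstep s.succ)
    constructor
    · rintro ⟨hh, hrest⟩
      exact ⟨by simpa [h0] using hh, fun s => by simpa using hih.1 hrest s⟩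
    · rintro ⟨hh, hrest⟩
      exact ⟨by simpa [h0] using hh, hih.2 fun s => by simpa using hrest s⟩

end QDAux

/-- Commutation of the quantum determinant with the generators, for a constant
cocycle.  In the setting of the previous proposition, assume moreover that the
cocycle is constant (`q i j = q₀`), each `f_{j_s}` is bijective, `D` is group-like,
and `r` also satisfies (CQT3).  With `a₀ := a`, `a_s := f_{j_s}(a_{s-1})` and
`b_N := b`, `b_{s-1} := f_{j_s}⁻¹(b_s)`, one has
`α(g_{a₀}(j₁),…,g_{a_{N-1}}(j_N)) • (D * t_{a_N, b})
  = α(g_{b₀}(j₁),…,g_{b_{N-1}}(j_N)) • (t_{a, b₀} * D)`. -/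
theorem quantum_determinant_commutation_set_theoretical
    {k : Type*} [Field k] {A : Type*} [Ring A] [Bialgebra k A]
    (n : ℕ) (g f : Fin n → Fin n → Fin n)
    (q : Fin n → Fin n → k) (hq : ∀ i j, q i j ≠ 0)
    (q₀ : k) (hconst : ∀ i j, q i j = q₀)
    (t : Fin n → Fin n → A)
    (hcomul : ∀ i j, Coalgebra.comul (R := k) (t i j) = ∑ m, t i m ⊗ₜ[k] t m j)
    (r : A →ₗ[k] A →ₗ[k] k)
    (hCQT1 : ∀ (a b c : A) {ι : Type*} (rc : Coalgebra.Repr k c ι),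
      r (a * b) c = ∑ i ∈ rc.index, r a (rc.left i) * r b (rc.right i))
    (hCQT3 : ∀ (x y : A) {ι₁ ι₂ : Type*} (rx : Coalgebra.Repr k x ι₁) (ry : Coalgebra.Repr k y ι₂),
      ∑ i ∈ rx.index, ∑ j ∈ ry.index,
          r (rx.left i) (ry.left j) • (rx.right i * ry.right j) =
        ∑ i ∈ rx.index, ∑ j ∈ ry.index,
          r (rx.right i) (ry.right j) • (ry.left j * rx.left i))
    (hrt : ∀ i c j l, r (t i c) (t j l) =
      if c = g j i ∧ l = f i j then q j i else 0)
    (N : ℕ) (hN : 1 ≤ N) (jseq : Fin N → Fin n)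
    (hfbij : ∀ s : Fin N, Function.Bijective (f (jseq s)))
    (α : (Fin N → Fin n) → k) (D : A)
    (hD : D = ∑ iseq : Fin N → Fin n,
      α iseq • (List.ofFn fun s => t (jseq s) (iseq s)).prod)
    (hDgrouplike : Coalgebra.comul (R := k) D = D ⊗ₜ[k] D)
    (aseq : Fin n → ℕ → Fin n)
    (ha0 : ∀ a, aseq a 0 = a)
    (haS : ∀ (a : Fin n) (s : Fin N), aseq a (s.1 + 1) = f (jseq s) (aseq a s.1))
    (bseq : Fin n → ℕ → Fin n)
    (hbN : ∀ b, bseq b N = b)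
    (hbS : ∀ (b : Fin n) (s : Fin N), f (jseq s) (bseq b s.1) = bseq b (s.1 + 1)) :
    ∀ a b : Fin n,
      α (fun s => g (aseq a s.1) (jseq s)) • (D * t (aseq a N) b) =
        α (fun s => g (bseq b s.1) (jseq s)) • (t a (bseq b 0) * D) := by
  intro a b
  have hrt' : ∀ i c j l, r (t i c) (t j l) = if c = g j i ∧ l = f i j then q₀ else 0 := by
    intro i c j l; rw [hrt, hconst]
  -- r applied to one of the products in D
  have hr_prod : ∀ (iseq : Fin N → Fin n) (x c : Fin n),
      r ((List.ofFn fun s => t (jseq s) (iseq s)).prod) (t x c) =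
        if qdOk f g (List.ofFn fun s => (jseq s, iseq s)) x ∧
            c = qdEnd f (List.ofFn fun s => (jseq s, iseq s)) x then q₀ ^ N else 0 := by
    intro iseq x c
    have hmap : (List.ofFn fun s => t (jseq s) (iseq s)) =
        (List.ofFn fun s => (jseq s, iseq s)).map (fun p => t p.1 p.2) := by
      rw [List.map_ofFn]; rfl
    obtain ⟨p, L', hL⟩ : ∃ p L', (List.ofFn fun s => (jseq s, iseq s)) = p :: L' := by
      cases hE : (List.ofFn fun s => (jseq s, iseq s)) with
      | nil =>
        exfalso
        have := congrArg List.length hE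
        simp at this
        omega
      | cons p L' => exact ⟨p, L', rfl⟩
    have hlen : (p :: L').length = N := by
      rw [← hL]; simp
    rw [hmap, hL, qd_r_prod g f q₀ t hcomul r hCQT1 hrt' L' p x c, hlen]
  -- the canonical sequence starting from x
  have hend : ∀ (iseq : Fin N → Fin n) (x : Fin n),
      qdEnd f (List.ofFn fun s => (jseq s, iseq s)) x = aseq x N := by
    intro iseq x
    exact qdEnd_ofFn f N jseq iseq x (aseq x) (ha0 x) (haS x)
  have hok : ∀ (iseq : Fin N → Fin n) (x : Fin n),
      qdOk f g (List.ofFn fun s => (jseq s, iseq s)) x ↔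
        iseq = fun s => g (aseq x s.1) (jseq s) := by
    intro iseq x
    rw [qdOk_ofFn f g N jseq iseq x (aseq x) (ha0 x) (haS x)]
    exact funext_iff.symm
  -- value of r D (t x c)
  have key_rD : ∀ x c : Fin n, r D (t x c) =
      if c = aseq x N then q₀ ^ N * α (fun s => g (aseq x s.1) (jseq s)) else 0 := by
    intro x c
    rw [hD, map_sum, LinearMap.sum_apply]
    simp only [map_smul, LinearMap.smul_apply, smul_eq_mul]
    have hterm : ∀ iseq : Fin N → Fin n,
        α iseq * r ((List.ofFn fun s => t (jseq s) (iseq s)).prod) (t x c) =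
        if iseq = (fun s => g (aseq x s.1) (jseq s)) then
          (if c = aseq x N then α iseq * q₀ ^ N else 0) else 0 := by
      intro iseq
      rw [hr_prod iseq x c, hend iseq x]
      by_cases h1 : iseq = fun s => g (aseq x s.1) (jseq s)
      · have hOk : qdOk f g (List.ofFn fun s => (jseq s, iseq s)) x := (hok iseq x).2 h1
        rw [if_pos h1]
        simp [hOk, mul_ite]
      · have hnOk : ¬ qdOk f g (List.ofFn fun s => (jseq s, iseq s)) x :=
          fun hh => h1 ((hok iseq x).1 hh)
        simp [h1, hnOk]
    rw [Finset.sum_congr rfl (fun iseq _ => hterm iseq),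
      Finset.sum_ite_eq' Finset.univ (fun s => g (aseq x s.1) (jseq s))
        (fun iseq => if c = aseq x N then α iseq * q₀ ^ N else 0),
      if_pos (Finset.mem_univ _)]
    split_ifs with h
    · ring
    · rfl
  -- relating aseq and bseq
  have habs : ∀ (x : Fin n) (s : ℕ), s ≤ N → aseq (bseq x 0) s = bseq x s := by
    intro x s
    induction s with
    | zero => intro _; exact ha0 _
    | succ s ih =>
      intro hs
      have hsN : s < N := by omega
      have := haS (bseq x 0) ⟨s, hsN⟩
      rw [this, ih (by omega), hbS x ⟨s, hsN⟩]
  have hinj : ∀ s : ℕ, s ≤ N → ∀ m m' : Fin n, aseq m s = aseq m' s → m = m' := by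
    intro s
    induction s with
    | zero => intro _ m m' h; rwa [ha0, ha0] at h
    | succ s ih =>
      intro hs m m' h
      have hsN : s < N := by omega
      rw [haS m ⟨s, hsN⟩, haS m' ⟨s, hsN⟩] at h
      exact ih (by omega) m m' ((hfbij ⟨s, hsN⟩).1 h)
  have hbiff : ∀ m : Fin n, b = aseq m N ↔ m = bseq b 0 := by
    intro m
    constructor
    · intro h
      refine hinj N le_rfl m (bseq b 0) ?_
      rw [habs b N le_rfl, hbN b, ← h]
    · rintro rfl
      rw [habs b N le_rfl, hbN b]
  -- apply CQT3
  have key := hCQT3 D (t a b)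
    (Coalgebra.Repr.mk (ι := PUnit) Finset.univ (fun _ => D) (fun _ => D)
      (by rw [hDgrouplike]; simp))
    (Coalgebra.Repr.mk (ι := ULift (Fin n)) Finset.univ
      (fun m => t a m.down) (fun m => t m.down b)
      (by rw [hcomul a b]; exact Fintype.sum_equiv Equiv.ulift _ _ (fun j => rfl)))
  have key2 : (∑ m : Fin n, r D (t a m) • (D * t m b))
      = ∑ m : Fin n, r D (t m b) • (t a m * D) := by
    have e1 : (∑ m : Fin n, r D (t a m) • (D * t m b))
        = ∑ j : ULift (Fin n), r D (t a j.down) • (D * t j.down b) :=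
      Fintype.sum_equiv Equiv.ulift.symm _ _ (fun j => rfl)
    have e2 : (∑ m : Fin n, r D (t m b) • (t a m * D))
        = ∑ j : ULift (Fin n), r D (t j.down b) • (t a j.down * D) :=
      Fintype.sum_equiv Equiv.ulift.symm _ _ (fun j => rfl)
    rw [e1, e2]
    simpa using key
  -- simplify both sides of key2
  have hLHS : (∑ m : Fin n, r D (t a m) • (D * t m b))
      = (q₀ ^ N * α (fun s => g (aseq a s.1) (jseq s))) • (D * t (aseq a N) b) := by
    rw [Finset.sum_eq_single (aseq a N)]
    · rw [key_rD a (aseq a N), if_pos rfl]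
    · intro m _ hm
      rw [key_rD a m, if_neg hm, zero_smul]
    · intro h; exact absurd (Finset.mem_univ _) h
  have hRHS : (∑ m : Fin n, r D (t m b) • (t a m * D))
      = (q₀ ^ N * α (fun s => g (bseq b s.1) (jseq s))) • (t a (bseq b 0) * D) := by
    rw [Finset.sum_eq_single (bseq b 0)]
    · rw [key_rD (bseq b 0) b, if_pos ((hbiff _).2 rfl)]
      have harg : (fun s : Fin N => g (aseq (bseq b 0) s.1) (jseq s))
          = fun s => g (bseq b s.1) (jseq s) :=
        funext fun s => by rw [habs b s.1 (le_of_lt s.2)]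
      rw [harg]
    · intro m _ hm
      rw [key_rD m b, if_neg (fun hh => hm ((hbiff m).1 hh)), zero_smul]
    · intro h; exact absurd (Finset.mem_univ _) h
  rw [hLHS, hRHS, mul_smul, mul_smul] at key2
  have hq0 : q₀ ≠ 0 := hconst a a ▸ hq a a
  have hpow : (q₀ ^ N : k) ≠ 0 := pow_ne_zero N hq0
  have hfin := congrArg (fun x => (q₀ ^ N)⁻¹ • x) key2
  simpa [inv_smul_smul₀ hpow] using hfin
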